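/- arXiv:1810.02531 — 2 statements merged into one kernel-verified Lean document; each statement's English description precedes it below -/
import Mathlib

section
/- Suppose e(k+1) = W(k) e(k) where each W(k) is an independent random matrix with 𝔼[W(k)ᵀW(k)] = M symmetric PSD doubly stochastic, and e(0) is orthogonal to 𝟙 and each W(k) preserves orthogonality to 𝟙. Then 𝔼[‖e(k)‖₂²] ≤ λ₂(M)^k ‖e(0)‖₂². -/
open Matrix MeasureTheory ProbabilityTheory

noncomputable def lambda2 {n : ℕ} (M : Matrix (Fin n) (Fin n) ℝ) : ℝ :=
  sSup {μ : ℝ | ∃ v : Fin n → ℝ, v ≠ 0 ∧ (∑ k, v k) = 0 ∧ M *ᵥ v = μ • v}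

variable {n : ℕ}

lemma sq_sum_pos {v : Fin n → ℝ} (hv0 : v ≠ 0) : 0 < ∑ l, v l ^ 2 := by
  have : ∃ l, v l ≠ 0 := by
    by_contra h; push_neg at h; exact hv0 (funext h)
  obtain ⟨l, hl⟩ := this
  exact Finset.sum_pos' (fun i _ => sq_nonneg _) ⟨l, Finset.mem_univ l, by positivity⟩

lemma dot_eig {M : Matrix (Fin n) (Fin n) ℝ} {v : Fin n → ℝ} {μ : ℝ}
    (hveig : M *ᵥ v = μ • v) : v ⬝ᵥ (M *ᵥ v) = μ * ∑ l, v l ^ 2 := by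
  rw [hveig]
  simp only [dotProduct, Pi.smul_apply, smul_eq_mul, Finset.mul_sum]
  exact Finset.sum_congr rfl fun l _ => by ring

lemma dot_eq_sumsum (M : Matrix (Fin n) (Fin n) ℝ) (v : Fin n → ℝ) :
    v ⬝ᵥ (M *ᵥ v) = ∑ i, ∑ j, M i j * v i * v j := by
  simp only [dotProduct, mulVec, Finset.mul_sum]
  exact Finset.sum_congr rfl fun i _ => Finset.sum_congr rfl fun j _ => by ring

lemma sumsum_le (M : Matrix (Fin n) (Fin n) ℝ) (hMnn : ∀ i j, 0 ≤ M i j)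
    (hMrow : ∀ i, ∑ j, M i j = 1) (hMcol : ∀ j, ∑ i, M i j = 1) (v : Fin n → ℝ) :
    ∑ i, ∑ j, M i j * v i * v j ≤ ∑ l, v l ^ 2 := by
  have h2 : ∀ i j, M i j * v i * v j ≤ M i j * (v i ^ 2) / 2 + M i j * (v j ^ 2) / 2 := by
    intro i j
    nlinarith [mul_nonneg (hMnn i j) (sq_nonneg (v i - v j))]
  calc ∑ i, ∑ j, M i j * v i * v j
      ≤ ∑ i, ∑ j, (M i j * (v i ^ 2) / 2 + M i j * (v j ^ 2) / 2) :=
        Finset.sum_le_sum fun i _ => Finset.sum_le_sum fun j _ => h2 i j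
    _ = ∑ i, ∑ j, M i j * (v i ^ 2) / 2 + ∑ i, ∑ j, M i j * (v j ^ 2) / 2 := by
        simp [Finset.sum_add_distrib]
    _ = ∑ l, v l ^ 2 := by
        have hA : ∑ i, ∑ j, M i j * (v i ^ 2) / 2 = ∑ i, (v i ^ 2) / 2 := by
          refine Finset.sum_congr rfl fun i _ => ?_
          rw [← Finset.sum_div, ← Finset.sum_mul, hMrow i, one_mul]
        have hB : ∑ i, ∑ j, M i j * (v j ^ 2) / 2 = ∑ j, (v j ^ 2) / 2 := by
          rw [Finset.sum_comm]
          refine Finset.sum_congr rfl fun j _ => ?_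
          rw [← Finset.sum_div, ← Finset.sum_mul, hMcol j, one_mul]
        rw [hA, hB, ← Finset.sum_add_distrib]
        exact Finset.sum_congr rfl fun l _ => by ring

lemma lambda2_bdd (M : Matrix (Fin n) (Fin n) ℝ) (hMnn : ∀ i j, 0 ≤ M i j)
    (hMrow : ∀ i, ∑ j, M i j = 1) (hMcol : ∀ j, ∑ i, M i j = 1) :
    BddAbove {μ : ℝ | ∃ v : Fin n → ℝ, v ≠ 0 ∧ (∑ k, v k) = 0 ∧ M *ᵥ v = μ • v} := by
  refine ⟨1, fun μ hμ => ?_⟩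
  obtain ⟨v, hv0, -, hveig⟩ := hμ
  have hpos := sq_sum_pos hv0
  have hq := dot_eig hveig
  have hb : v ⬝ᵥ (M *ᵥ v) ≤ ∑ l, v l ^ 2 :=
    (dot_eq_sumsum M v).le.trans (sumsum_le M hMnn hMrow hMcol v)
  nlinarith

lemma lambda2_nonneg (M : Matrix (Fin n) (Fin n) ℝ) (hMpsd : M.PosSemidef)
    (hMnn : ∀ i j, 0 ≤ M i j)
    (hMrow : ∀ i, ∑ j, M i j = 1) (hMcol : ∀ j, ∑ i, M i j = 1) :
    0 ≤ lambda2 M := by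
  unfold lambda2
  set s := {μ : ℝ | ∃ v : Fin n → ℝ, v ≠ 0 ∧ (∑ k, v k) = 0 ∧ M *ᵥ v = μ • v} with hs
  rcases Set.eq_empty_or_nonempty s with h | ⟨μ, hμ⟩
  · rw [h, Real.sSup_empty]
  · have hμ' := hμ
    obtain ⟨v, hv0, -, hveig⟩ := hμ'
    have hpos := sq_sum_pos hv0
    have hq := dot_eig hveig
    have hnn : 0 ≤ v ⬝ᵥ (M *ᵥ v) := by simpa using hMpsd.dotProduct_mulVec_nonneg v
    have hμnn : 0 ≤ μ := by nlinarith
    exact hμnn.trans (le_csSup (lambda2_bdd M hMnn hMrow hMcol) hμ)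
variable {n₀ : ℕ}
variable {n : ℕ}

noncomputable def sumLin : EuclideanSpace ℝ (Fin n) →ₗ[ℝ] ℝ where
  toFun v := ∑ i, v i
  map_add' x y := by simp [Finset.sum_add_distrib]
  map_smul' c x := by simp [Finset.mul_sum]

noncomputable def Tlin (M : Matrix (Fin n) (Fin n) ℝ) :
    EuclideanSpace ℝ (Fin n) →ₗ[ℝ] EuclideanSpace ℝ (Fin n) where
  toFun v := WithLp.toLp 2 (M *ᵥ v)
  map_add' x y := by ext i; simp [Matrix.mulVec_add]
  map_smul' c x := by ext i; simp [Matrix.mulVec_smul]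

lemma quad_le (M : Matrix (Fin n) (Fin n) ℝ) (hMsymm : M.IsSymm)
    (hMnn : ∀ i j, 0 ≤ M i j)
    (hMrow : ∀ i, ∑ j, M i j = 1) (hMcol : ∀ j, ∑ i, M i j = 1)
    (v : Fin n → ℝ) (hv : ∑ l, v l = 0) :
    v ⬝ᵥ (M *ᵥ v) ≤ lambda2 M * ∑ l, v l ^ 2 := by
  classical
  have hMsym' : ∀ i j, M j i = M i j := fun i j => by
    conv_lhs => rw [← hMsymm]
    rfl
  set S : Submodule ℝ (EuclideanSpace ℝ (Fin n)) := LinearMap.ker (sumLin (n := n)) with hS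
  have hTsym : ∀ x y : EuclideanSpace ℝ (Fin n),
      inner ℝ (Tlin M x) y = (inner ℝ x (Tlin M y) : ℝ) := by
    intro x y
    simp only [PiLp.inner_apply, RCLike.inner_apply, conj_trivial, Tlin, LinearMap.coe_mk,
      AddHom.coe_mk, mulVec, dotProduct]
    conv_lhs => arg 2; ext i; rw [mul_comm]
    conv_rhs => arg 2; ext i; rw [mul_comm]
    calc ∑ i, (∑ j, M i j * x j) * y i
        = ∑ i, ∑ j, M i j * x j * y i := by
          exact Finset.sum_congr rfl fun i _ => Finset.sum_mul ..
      _ = ∑ j, ∑ i, M i j * x j * y i := Finset.sum_comm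
      _ = ∑ j, x j * ∑ i, M j i * y i := by
          refine Finset.sum_congr rfl fun j _ => ?_
          rw [Finset.mul_sum]
          exact Finset.sum_congr rfl fun i _ => by rw [hMsym' j i]; ring
  have hTS : ∀ x ∈ S, Tlin M x ∈ S := by
    intro x hx
    have hx' : ∑ i, x i = 0 := hx
    show ∑ i, (M *ᵥ (x : Fin n → ℝ)) i = 0
    simp only [mulVec, dotProduct]
    rw [Finset.sum_comm]
    calc ∑ j, ∑ i, M i j * x j = ∑ j, x j := by
          refine Finset.sum_congr rfl fun j _ => ?_
          rw [← Finset.sum_mul, hMcol j, one_mul]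
      _ = 0 := hx'
  set T' : S →ₗ[ℝ] S := (Tlin M).restrict hTS with hT'
  have hT'coe : ∀ x : S, (T' x : EuclideanSpace ℝ (Fin n)) = Tlin M x := fun x =>
    LinearMap.restrict_coe_apply _ _ _
  have hT'sym : T'.IsSymmetric := by
    intro x y
    show (inner ℝ (T' x) y : ℝ) = inner ℝ x (T' y)
    rw [Submodule.coe_inner, Submodule.coe_inner, hT'coe, hT'coe]
    exact hTsym x y
  set m := Module.finrank ℝ S with hm
  have hmrank : Module.finrank ℝ S = m := rfl
  set b := hT'sym.eigenvectorBasis hmrank with hb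
  set μs := hT'sym.eigenvalues hmrank with hμs
  have heig : ∀ i, T' (b i) = μs i • b i := fun i =>
    hT'sym.apply_eigenvectorBasis hmrank i
  have hμs_le : ∀ i, μs i ≤ lambda2 M := by
    intro i
    have hev := hT'sym.hasEigenvector_eigenvectorBasis hmrank i
    refine le_csSup (lambda2_bdd M hMnn hMrow hMcol) ?_
    refine ⟨(b i : EuclideanSpace ℝ (Fin n)), ?_, ?_, ?_⟩
    · intro h
      exact hev.2 (Subtype.ext (by simpa using congrArg (WithLp.toLp 2) h))
    · exact (b i).2
    · have h1 := congrArg (Subtype.val) (heig i)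
      rw [hT'coe] at h1
      simpa [Tlin] using congrArg WithLp.ofLp h1
  let xv : EuclideanSpace ℝ (Fin n) := WithLp.toLp 2 v
  have hx : xv ∈ S := hv
  set x : S := ⟨xv, hx⟩ with hxdef
  have hrepr : ∀ i, b.repr (T' x) i = μs i * b.repr x i := by
    intro i
    rw [b.repr_apply_apply, b.repr_apply_apply, ← hT'sym (b i) x, heig i]
    simp only [Submodule.coe_inner, Submodule.coe_smul, PiLp.inner_apply, RCLike.inner_apply,
      conj_trivial, PiLp.smul_apply, smul_eq_mul]
    rw [Finset.mul_sum]
    exact Finset.sum_congr rfl fun l _ => by ring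
  have hinner1 : (inner ℝ x (T' x) : ℝ) = ∑ i, μs i * (b.repr x i)^2 := by
    rw [← b.repr.inner_map_map x (T' x)]
    simp only [PiLp.inner_apply, RCLike.inner_apply, conj_trivial]
    refine Finset.sum_congr rfl fun i _ => ?_
    rw [hrepr i]; ring
  have hinner2 : (inner ℝ x x : ℝ) = ∑ i, (b.repr x i)^2 := by
    rw [← b.repr.inner_map_map x x]
    simp only [PiLp.inner_apply, RCLike.inner_apply, conj_trivial]
    exact Finset.sum_congr rfl fun i _ => by ring
  have hray : (inner ℝ x (T' x) : ℝ) ≤ lambda2 M * (inner ℝ x x : ℝ) := by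
    rw [hinner1, hinner2, Finset.mul_sum]
    exact Finset.sum_le_sum fun i _ =>
      mul_le_mul_of_nonneg_right (hμs_le i) (sq_nonneg _)
  have h1 : (inner ℝ x (T' x) : ℝ) = v ⬝ᵥ (M *ᵥ v) := by
    rw [Submodule.coe_inner, hT'coe]
    simp only [PiLp.inner_apply, RCLike.inner_apply, conj_trivial]
    simp only [dotProduct]; exact Finset.sum_congr rfl fun l _ => mul_comm _ _
  have h2 : (inner ℝ x x : ℝ) = ∑ l, v l ^ 2 := by
    rw [Submodule.coe_inner]
    simp only [PiLp.inner_apply, RCLike.inner_apply, conj_trivial]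
    exact Finset.sum_congr rfl fun l _ => by ring
  rw [h1, h2] at hray
  exact hray

section aux
variable {n : ℕ}

lemma norm_mulVec_expand (Wm : Fin n → Fin n → ℝ) (v : Fin n → ℝ) :
    ∑ l, ((Matrix.of Wm) *ᵥ v) l ^ 2
      = ∑ i, ∑ j, ((Matrix.of Wm)ᵀ * Matrix.of Wm) i j * (v i * v j) := by
  simp only [Matrix.mul_apply, Matrix.transpose_apply, Matrix.of_apply, Matrix.mulVec,
    dotProduct, sq]
  calc ∑ l, (∑ i, Wm l i * v i) * (∑ j, Wm l j * v j)
      = ∑ l, ∑ i, ∑ j, (Wm l i * v i) * (Wm l j * v j) := by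
        refine Finset.sum_congr rfl fun l _ => ?_
        rw [Finset.sum_mul_sum]
    _ = ∑ i, ∑ l, ∑ j, (Wm l i * v i) * (Wm l j * v j) := Finset.sum_comm
    _ = ∑ i, ∑ j, ∑ l, (Wm l i * v i) * (Wm l j * v j) := by
        exact Finset.sum_congr rfl fun i _ => Finset.sum_comm
    _ = ∑ i, ∑ j, (∑ l, Wm l i * Wm l j) * (v i * v j) := by
        refine Finset.sum_congr rfl fun i _ => Finset.sum_congr rfl fun j _ => ?_
        rw [Finset.sum_mul]
        exact Finset.sum_congr rfl fun l _ => by ring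

lemma abs_mul_le_half_sq (a b : ℝ) : |a * b| ≤ (a ^ 2 + b ^ 2) / 2 := by
  rw [abs_mul]
  nlinarith [sq_abs a, sq_abs b, sq_nonneg (|a| - |b|), abs_nonneg a, abs_nonneg b]

lemma diag_pos (M : Matrix (Fin n) (Fin n) ℝ) (hMpsd : M.PosSemidef)
    (hMnn : ∀ i j, 0 ≤ M i j) (hMrow : ∀ i, ∑ j, M i j = 1)
    (hMsymm : M.IsSymm) : ∀ i, 0 < M i i := by
  have hMsym' : ∀ i j, M j i = M i j := fun i j => by
    conv_lhs => rw [← hMsymm]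
    rfl
  intro i
  rcases (hMnn i i).lt_or_eq with h | h
  · exact h
  exfalso
  have hzero : ∀ j, M i j = 0 := by
    intro j
    by_cases hji : j = i
    · rw [hji]; exact h.symm
    by_contra hj
    have hjpos : 0 < M i j := (hMnn i j).lt_of_ne (Ne.symm hj)
    have hq : ∀ t : ℝ, 0 ≤ 2 * M i j * t + M j j := by
      intro t
      set x : Fin n → ℝ := (Pi.single i t : Fin n → ℝ) + (Pi.single j 1 : Fin n → ℝ) with hx
      have h2 := hMpsd.dotProduct_mulVec_nonneg x
      rw [star_trivial] at h2
      have hexp : x ⬝ᵥ (M *ᵥ x) = 2 * M i j * t + M j j := by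
        rw [hx]
        rw [Matrix.mulVec_add, Matrix.mulVec_single, Matrix.mulVec_single]
        rw [add_dotProduct, dotProduct_add, dotProduct_add]
        simp only [single_dotProduct]
        simp only [Pi.smul_apply, op_smul_eq_mul, Matrix.col_apply]
        rw [← h, hMsym' i j]
        ring
      rw [hexp] at h2
      exact h2
    have := hq (-(M j j + 1) / (2 * M i j))
    rw [mul_div_cancel₀] at this
    · linarith
    · positivity
  have h1 : (1 : ℝ) = 0 := by
    rw [← hMrow i]
    exact Finset.sum_eq_zero fun j _ => hzero j
  norm_num at h1

end aux
theorem stmt_7 {n : ℕ} {Ω : Type*} [MeasurableSpace Ω] (μ : Measure Ω)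
    [IsProbabilityMeasure μ]
    (W : ℕ → Ω → (Fin n → Fin n → ℝ))
    (hWmeas : ∀ k, Measurable (W k))
    (hWindep : iIndepFun W μ)
    (M : Matrix (Fin n) (Fin n) ℝ)
    (hMsymm : M.IsSymm) (hMpsd : M.PosSemidef)
    (hMnn : ∀ i j, 0 ≤ M i j)
    (hMrow : ∀ i, ∑ j, M i j = 1) (hMcol : ∀ j, ∑ i, M i j = 1)
    (hM : ∀ k i j, (∫ ω, ((Matrix.of (W k ω))ᵀ * Matrix.of (W k ω)) i j ∂μ) = M i j)
    (hWones : ∀ k ω (v : Fin n → ℝ), (∑ l, v l) = 0 →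
      ∑ l, (Matrix.of (W k ω) *ᵥ v) l = 0)
    (e : ℕ → Ω → (Fin n → ℝ)) (e0 : Fin n → ℝ)
    (he0 : ∀ ω, e 0 ω = e0) (he0sum : ∑ l, e0 l = 0)
    (herec : ∀ k ω, e (k + 1) ω = Matrix.of (W k ω) *ᵥ e k ω) :
    ∀ k, (∫ ω, ∑ l, (e k ω l) ^ 2 ∂μ) ≤ lambda2 M ^ k * ∑ l, e0 l ^ 2 := by
  classical
  have hl2 : 0 ≤ lambda2 M := lambda2_nonneg M hMpsd hMnn hMrow hMcol
  have hdiag := diag_pos M hMpsd hMnn hMrow hMsymm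
  -- coordinates of W are measurable
  have hWc : ∀ k l i, Measurable (fun ω => W k ω l i) := fun k l i =>
    (measurable_pi_apply i).comp ((measurable_pi_apply l).comp (hWmeas k))
  -- A entries as explicit sums
  have hAeq : ∀ k i j, (fun ω => ((Matrix.of (W k ω))ᵀ * Matrix.of (W k ω)) i j)
      = fun ω => ∑ l, W k ω l i * W k ω l j := by
    intro k i j
    funext ω
    simp [Matrix.mul_apply]
  have hAmeas : ∀ k i j, Measurable (fun ω => ((Matrix.of (W k ω))ᵀ * Matrix.of (W k ω)) i j) := by
    intro k i j
    rw [hAeq]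
    exact Finset.measurable_sum _ fun l _ => (hWc k l i).mul (hWc k l j)
  -- measurability of e
  have he_meas : ∀ k, Measurable (e k) := by
    intro k
    induction k with
    | zero =>
      have : e 0 = fun _ => e0 := funext he0
      rw [this]; exact measurable_const
    | succ k ih =>
      have : e (k + 1) = fun ω => Matrix.of (W k ω) *ᵥ e k ω := funext (herec k)
      rw [this]
      refine measurable_pi_lambda _ fun i => ?_
      have : (fun ω => (Matrix.of (W k ω) *ᵥ e k ω) i)
          = fun ω => ∑ j, W k ω i j * e k ω j := by
        funext ω; simp [Matrix.mulVec, dotProduct]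
      rw [this]
      exact Finset.measurable_sum _ fun j _ =>
        (hWc k i j).mul ((measurable_pi_apply j).comp ih)
  have he_meas_c : ∀ k i, Measurable (fun ω => e k ω i) := fun k i =>
    (measurable_pi_apply i).comp (he_meas k)
  -- e k factors through W 0, ..., W (k-1)
  have hfact : ∀ k, ∃ g : (((Finset.range k) : Finset ℕ) → (Fin n → Fin n → ℝ)) → (Fin n → ℝ),
      Measurable g ∧ ∀ ω, e k ω = g (fun j => W (j : ℕ) ω) := by
    intro k
    induction k with
    | zero => exact ⟨fun _ => e0, measurable_const, fun ω => he0 ω⟩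
    | succ k ih =>
      obtain ⟨g, hgmeas, hge⟩ := ih
      have hmem : ∀ j : ((Finset.range k) : Finset ℕ), (j : ℕ) ∈ Finset.range (k + 1) :=
        fun j => Finset.mem_range.mpr (Nat.lt_succ_of_lt (Finset.mem_range.mp j.2))
      refine ⟨fun t => Matrix.of (t ⟨k, Finset.self_mem_range_succ k⟩) *ᵥ
          g (fun j => t ⟨(j : ℕ), hmem j⟩), ?_, ?_⟩
      · refine measurable_pi_lambda _ fun i => ?_
        have hres : Measurable (fun t : (((Finset.range (k+1)) : Finset ℕ) →
            (Fin n → Fin n → ℝ)) => g (fun j => t ⟨(j : ℕ), hmem j⟩)) :=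
          hgmeas.comp (measurable_pi_lambda _ fun j => measurable_pi_apply _)
        have : (fun t : (((Finset.range (k+1)) : Finset ℕ) → (Fin n → Fin n → ℝ)) =>
            (Matrix.of (t ⟨k, Finset.self_mem_range_succ k⟩) *ᵥ
              g (fun j => t ⟨(j : ℕ), hmem j⟩)) i)
            = fun t => ∑ j, t ⟨k, Finset.self_mem_range_succ k⟩ i j *
                g (fun j' => t ⟨(j' : ℕ), hmem j'⟩) j := by
          funext t; simp [Matrix.mulVec, dotProduct]
        rw [this]
        refine Finset.measurable_sum _ fun j _ => Measurable.mul ?_ ?_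
        · exact (measurable_pi_apply j).comp
            ((measurable_pi_apply i).comp (measurable_pi_apply _))
        · exact (measurable_pi_apply j).comp hres
      · intro ω
        rw [herec k ω, hge ω]
  -- independence of W k and e k
  have hindep : ∀ k, IndepFun (W k) (e k) μ := by
    intro k
    obtain ⟨g, hgmeas, hge⟩ := hfact k
    have hd : Disjoint ({k} : Finset ℕ) (Finset.range k) :=
      Finset.disjoint_singleton_left.mpr (by simp)
    have h := hWindep.indepFun_finset {k} (Finset.range k) hd hWmeas
    have h2 := h.comp
      (φ := fun t : (({k} : Finset ℕ) → (Fin n → Fin n → ℝ)) =>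
        t ⟨k, Finset.mem_singleton_self k⟩)
      (ψ := g) (show Measurable (fun t : (({k} : Finset ℕ) → (Fin n → Fin n → ℝ)) =>
        t ⟨k, Finset.mem_singleton_self k⟩) from measurable_pi_apply _) hgmeas
    have he : e k = fun ω => g fun j => W (j : ℕ) ω := funext hge
    rw [he]
    exact h2
  have hindepA : ∀ k i j, IndepFun (fun ω => ((Matrix.of (W k ω))ᵀ * Matrix.of (W k ω)) i j)
      (fun ω => e k ω i * e k ω j) μ := by
    intro k i j
    have hφ : Measurable (fun Wm : Fin n → Fin n → ℝ => ((Matrix.of Wm)ᵀ * Matrix.of Wm) i j) := by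
      have : (fun Wm : Fin n → Fin n → ℝ => ((Matrix.of Wm)ᵀ * Matrix.of Wm) i j)
          = fun Wm => ∑ l, Wm l i * Wm l j := by
        funext Wm; simp [Matrix.mul_apply]
      rw [this]
      exact Finset.measurable_sum _ fun l _ => Measurable.mul
        ((measurable_pi_apply i).comp (measurable_pi_apply l))
        ((measurable_pi_apply j).comp (measurable_pi_apply l))
    have hψ : Measurable (fun v : Fin n → ℝ => v i * v j) :=
      (measurable_pi_apply i).mul (measurable_pi_apply j)
    exact (hindep k).comp hφ hψ
  -- the main induction
  have key : ∀ k, (∀ i, Integrable (fun ω => (e k ω i) ^ 2) μ) ∧ (∀ ω, ∑ l, e k ω l = 0) ∧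
      (∫ ω, ∑ l, (e k ω l) ^ 2 ∂μ) ≤ lambda2 M ^ k * ∑ l, e0 l ^ 2 := by
    intro k
    induction k with
    | zero =>
      refine ⟨fun i => ?_, fun ω => by rw [he0]; exact he0sum, ?_⟩
      · have : (fun ω => (e 0 ω i) ^ 2) = fun _ => e0 i ^ 2 := funext fun ω => by rw [he0]
        rw [this]; exact integrable_const _
      · simp only [he0, pow_zero, one_mul, integral_const, measure_univ, ENNReal.toReal_one,
          smul_eq_mul, probReal_univ]
        exact le_refl _
    | succ k ih =>
      obtain ⟨hint, hsum, hle⟩ := ih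
      have hsum' : ∀ ω, ∑ l, e (k + 1) ω l = 0 := fun ω => by
        rw [herec]; exact hWones k ω (e k ω) (hsum ω)
      -- integrability of products of coordinates of e k
      have hvint : ∀ i j, Integrable (fun ω => e k ω i * e k ω j) μ := by
        intro i j
        refine Integrable.mono (((hint i).add (hint j)).div_const 2)
          (((he_meas_c k i).mul (he_meas_c k j)).aestronglyMeasurable)
          (ae_of_all _ fun ω => ?_)
        simp only [Pi.add_apply, Real.norm_eq_abs]
        rw [abs_of_nonneg (show (0:ℝ) ≤ (e k ω i ^ 2 + e k ω j ^ 2) / 2 by positivity)]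
        exact abs_mul_le_half_sq _ _
      -- integrability of diagonal entries of A
      have hAdiag : ∀ i, Integrable (fun ω => ((Matrix.of (W k ω))ᵀ * Matrix.of (W k ω)) i i) μ := by
        intro i
        by_contra hni
        have h0 := hM k i i
        rw [integral_undef hni] at h0
        exact absurd h0.symm (ne_of_gt (hdiag i))
      -- integrability of all entries of A
      have hAint : ∀ i j, Integrable (fun ω => ((Matrix.of (W k ω))ᵀ * Matrix.of (W k ω)) i j) μ := by
        intro i j
        refine Integrable.mono (((hAdiag i).add (hAdiag j)).div_const 2)
          (hAmeas k i j).aestronglyMeasurable (ae_of_all _ fun ω => ?_)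
        have hAii : ((Matrix.of (W k ω))ᵀ * Matrix.of (W k ω)) i i = ∑ l, W k ω l i * W k ω l i := by
          rw [congrFun (hAeq k i i) ω]
        have hAjj : ((Matrix.of (W k ω))ᵀ * Matrix.of (W k ω)) j j = ∑ l, W k ω l j * W k ω l j := by
          rw [congrFun (hAeq k j j) ω]
        have hAij : ((Matrix.of (W k ω))ᵀ * Matrix.of (W k ω)) i j = ∑ l, W k ω l i * W k ω l j := by
          rw [congrFun (hAeq k i j) ω]
        simp only [Pi.add_apply, Real.norm_eq_abs]
        rw [hAij]
        have hnn : 0 ≤ (((Matrix.of (W k ω))ᵀ * Matrix.of (W k ω)) i i +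
            ((Matrix.of (W k ω))ᵀ * Matrix.of (W k ω)) j j) / 2 := by
          rw [hAii, hAjj]
          have h1 : 0 ≤ ∑ l, W k ω l i * W k ω l i :=
            Finset.sum_nonneg fun l _ => mul_self_nonneg _
          have h2 : 0 ≤ ∑ l, W k ω l j * W k ω l j :=
            Finset.sum_nonneg fun l _ => mul_self_nonneg _
          linarith
        rw [abs_of_nonneg hnn, hAii, hAjj]
        calc |∑ l, W k ω l i * W k ω l j| ≤ ∑ l, |W k ω l i * W k ω l j| :=
              Finset.abs_sum_le_sum_abs _ _
          _ ≤ ∑ l, ((W k ω l i) ^ 2 + (W k ω l j) ^ 2) / 2 :=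
              Finset.sum_le_sum fun l _ => abs_mul_le_half_sq _ _
          _ = ((∑ l, W k ω l i * W k ω l i) + ∑ l, W k ω l j * W k ω l j) / 2 := by
              rw [← Finset.sum_add_distrib, ← Finset.sum_div]
              congr 1
              exact Finset.sum_congr rfl fun l _ => by ring
      -- integrability of products
      have hprod : ∀ i j, Integrable
          (fun ω => ((Matrix.of (W k ω))ᵀ * Matrix.of (W k ω)) i j * (e k ω i * e k ω j)) μ :=
        fun i j => (hindepA k i j).integrable_mul (hAint i j) (hvint i j)
      -- pointwise expansion
      have hpt : ∀ ω, ∑ l, (e (k + 1) ω l) ^ 2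
          = ∑ i, ∑ j, ((Matrix.of (W k ω))ᵀ * Matrix.of (W k ω)) i j * (e k ω i * e k ω j) := by
        intro ω
        rw [herec]
        exact norm_mulVec_expand (W k ω) (e k ω)
      have hsum_int : Integrable (fun ω => ∑ i, ∑ j,
          ((Matrix.of (W k ω))ᵀ * Matrix.of (W k ω)) i j * (e k ω i * e k ω j)) μ :=
        integrable_finset_sum _ fun i _ => integrable_finset_sum _ fun j _ => hprod i j
      -- integrability of squares at k+1
      have hint' : ∀ i, Integrable (fun ω => (e (k + 1) ω i) ^ 2) μ := by
        intro i
        refine Integrable.mono hsum_int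
          (((he_meas_c (k+1) i).pow measurable_const).aestronglyMeasurable)
          (ae_of_all _ fun ω => ?_)
        rw [Real.norm_eq_abs, Real.norm_eq_abs, abs_of_nonneg (sq_nonneg _), ← hpt ω]
        rw [abs_of_nonneg (show (0:ℝ) ≤ ∑ l, (e (k+1) ω l) ^ 2 from
          Finset.sum_nonneg fun l _ => sq_nonneg _)]
        exact Finset.single_le_sum (f := fun l => (e (k+1) ω l) ^ 2)
          (fun l _ => sq_nonneg _) (Finset.mem_univ i)
      -- the integral identity
      have hcalc : (∫ ω, ∑ l, (e (k + 1) ω l) ^ 2 ∂μ)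
          = ∑ i, ∑ j, M i j * ∫ ω, e k ω i * e k ω j ∂μ := by
        rw [integral_congr_ae (ae_of_all _ hpt)]
        rw [integral_finset_sum _ fun i _ => integrable_finset_sum _ fun j _ => hprod i j]
        refine Finset.sum_congr rfl fun i _ => ?_
        rw [integral_finset_sum _ fun j _ => hprod i j]
        refine Finset.sum_congr rfl fun j _ => ?_
        have := (hindepA k i j).integral_fun_mul_eq_mul_integral (hAmeas k i j).aestronglyMeasurable
          ((he_meas_c k i).mul (he_meas_c k j)).aestronglyMeasurable
        rw [← hM k i j]
        exact this
      have hMv : ∑ i, ∑ j, M i j * ∫ ω, e k ω i * e k ω j ∂μ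
          = ∫ ω, ∑ i, ∑ j, M i j * (e k ω i * e k ω j) ∂μ := by
        rw [integral_finset_sum _ fun i _ =>
          integrable_finset_sum _ fun j _ => (hvint i j).const_mul (M i j)]
        refine Finset.sum_congr rfl fun i _ => ?_
        rw [integral_finset_sum _ fun j _ => (hvint i j).const_mul (M i j)]
        exact Finset.sum_congr rfl fun j _ => (integral_const_mul _ _).symm
      have hquad : ∀ ω, ∑ i, ∑ j, M i j * (e k ω i * e k ω j)
          ≤ lambda2 M * ∑ l, (e k ω l) ^ 2 := by
        intro ω
        have h := quad_le M hMsymm hMnn hMrow hMcol (e k ω) (hsum ω)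
        rw [dot_eq_sumsum] at h
        calc ∑ i, ∑ j, M i j * (e k ω i * e k ω j)
            = ∑ i, ∑ j, M i j * e k ω i * e k ω j :=
              Finset.sum_congr rfl fun i _ => Finset.sum_congr rfl fun j _ => by ring
          _ ≤ lambda2 M * ∑ l, (e k ω l) ^ 2 := h
      have hfinal : (∫ ω, ∑ i, ∑ j, M i j * (e k ω i * e k ω j) ∂μ)
          ≤ lambda2 M * ∫ ω, ∑ l, (e k ω l) ^ 2 ∂μ := by
        have h1 : Integrable (fun ω => ∑ i, ∑ j, M i j * (e k ω i * e k ω j)) μ :=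
          integrable_finset_sum _ fun i _ =>
            integrable_finset_sum _ fun j _ => (hvint i j).const_mul (M i j)
        have h2 : Integrable (fun ω => lambda2 M * ∑ l, (e k ω l) ^ 2) μ :=
          (integrable_finset_sum _ fun l _ => hint l).const_mul _
        calc (∫ ω, ∑ i, ∑ j, M i j * (e k ω i * e k ω j) ∂μ)
            ≤ ∫ ω, lambda2 M * ∑ l, (e k ω l) ^ 2 ∂μ := integral_mono h1 h2 hquad
          _ = lambda2 M * ∫ ω, ∑ l, (e k ω l) ^ 2 ∂μ := integral_const_mul _ _
      refine ⟨hint', hsum', ?_⟩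
      calc (∫ ω, ∑ l, (e (k + 1) ω l) ^ 2 ∂μ)
          = ∫ ω, ∑ i, ∑ j, M i j * (e k ω i * e k ω j) ∂μ := by rw [hcalc, hMv]
        _ ≤ lambda2 M * ∫ ω, ∑ l, (e k ω l) ^ 2 ∂μ := hfinal
        _ ≤ lambda2 M * (lambda2 M ^ k * ∑ l, e0 l ^ 2) :=
            mul_le_mul_of_nonneg_left hle hl2
        _ = lambda2 M ^ (k + 1) * ∑ l, e0 l ^ 2 := by rw [pow_succ]; ring
  exact fun k => (key k).2.2
end

section
/- Let (P_k) and (P̂_k) be sequences of symmetric positive definite nm×nm matrices satisfying P̂_{k+1} = W (Ā P̂_k Āᵀ + C) Wᵀ and P_{k+1} = Ā P_k Āᵀ + C, where W is symmetric doubly stochastic, Ā is orthogonal, C is symmetric PSD, and Tr(P̂_0) ≤ Tr(P_0). Then Tr(P̂_k) ≤ Tr(P_k) for all k ≥ 0. -/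
open Matrix

lemma psd_entry_le {N : Type*} [Fintype N] [DecidableEq N]
    {X : Matrix N N ℝ} (hX : X.PosSemidef) (i j : N) :
    X j i ≤ (X i i + X j j) / 2 := by
  have hsymm : X j i = X i j := by
    have := hX.1
    rw [Matrix.IsHermitian] at this
    have := congrFun (congrFun this j) i
    simpa [Matrix.conjTranspose_apply] using this.symm
  have h := hX.dotProduct_mulVec_nonneg (Pi.single i (1:ℝ) - Pi.single j 1)
  have hv : (X *ᵥ (Pi.single i 1 - Pi.single j 1))
      = X *ᵥ Pi.single i 1 - X *ᵥ Pi.single j 1 := by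
    rw [Matrix.mulVec_sub]
  rw [show (star (Pi.single i 1 - Pi.single j 1) : N → ℝ)
      = Pi.single i 1 - Pi.single j 1 by simp, hv,
    dotProduct_sub, sub_dotProduct, sub_dotProduct,
    single_dotProduct, single_dotProduct,
    single_dotProduct, single_dotProduct] at h
  simp only [Matrix.mulVec_single_one, Matrix.col_apply, mul_one, one_mul] at h
  rw [hsymm]
  linarith

lemma trace_conj_le {N : Type*} [Fintype N] [DecidableEq N]
    {W X : Matrix N N ℝ} (hX : X.PosSemidef)
    (hWnn : ∀ i j, 0 ≤ W i j)
    (hWrow : ∀ i, ∑ j, W i j = 1) (hWcol : ∀ j, ∑ i, W i j = 1) :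
    (W * X * Wᵀ).trace ≤ X.trace := by
  have h1 : (W * X * Wᵀ).trace = ((Wᵀ * W) * X).trace := by
    rw [Matrix.trace_mul_cycle]
  set S := Wᵀ * W with hS
  have hSnn : ∀ i j, 0 ≤ S i j := fun i j => by
    simp only [hS, Matrix.mul_apply, Matrix.transpose_apply]
    exact Finset.sum_nonneg fun k _ => mul_nonneg (hWnn k i) (hWnn k j)
  have hSrow : ∀ i, ∑ j, S i j = 1 := fun i => by
    simp only [hS, Matrix.mul_apply, Matrix.transpose_apply]
    rw [Finset.sum_comm]
    calc ∑ k, ∑ j, W k i * W k j = ∑ k, W k i * ∑ j, W k j := by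
          simp [Finset.mul_sum]
      _ = 1 := by simp [hWrow, hWcol]
  have hScol : ∀ j, ∑ i, S i j = 1 := fun j => by
    simp only [hS, Matrix.mul_apply, Matrix.transpose_apply]
    rw [Finset.sum_comm]
    calc ∑ k, ∑ i, W k i * W k j = ∑ k, (∑ i, W k i) * W k j := by
          simp [Finset.sum_mul]
      _ = 1 := by simp [hWrow, hWcol]
  rw [h1]
  have htr : ((S * X)).trace = ∑ i, ∑ j, S i j * X j i := by
    simp [Matrix.trace, Matrix.diag, Matrix.mul_apply]
  rw [htr]
  have hle : ∑ i, ∑ j, S i j * X j i ≤ ∑ i, ∑ j, S i j * ((X i i + X j j) / 2) := by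
    refine Finset.sum_le_sum fun i _ => Finset.sum_le_sum fun j _ => ?_
    exact mul_le_mul_of_nonneg_left (psd_entry_le hX i j) (hSnn i j)
  refine hle.trans (le_of_eq ?_)
  have split : ∀ i j, S i j * ((X i i + X j j) / 2) = S i j * X i i / 2 + S i j * X j j / 2 :=
    fun i j => by ring
  have e1 : ∑ i, ∑ j, S i j * X i i / 2 = ∑ i, X i i / 2 := by
    refine Finset.sum_congr rfl fun i _ => ?_
    rw [← Finset.sum_div, ← Finset.sum_mul, hSrow, one_mul]
  have e2 : ∑ i, ∑ j, S i j * X j j / 2 = ∑ j, X j j / 2 := by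
    rw [Finset.sum_comm]
    refine Finset.sum_congr rfl fun j _ => ?_
    rw [← Finset.sum_div, ← Finset.sum_mul, hScol, one_mul]
  have e3 : (∑ i, X i i / 2) + ∑ i, X i i / 2 = ∑ i, X i i := by
    rw [← Finset.sum_add_distrib]
    exact Finset.sum_congr rfl fun i _ => by ring
  simp_rw [split, Finset.sum_add_distrib]
  rw [e1, e2, e3]
  simp [Matrix.trace, Matrix.diag]

theorem stmt_12 {n m : ℕ}
    (P Phat : ℕ → Matrix (Fin (n * m)) (Fin (n * m)) ℝ)
    (hP : ∀ k, (P k).PosDef) (hPhat : ∀ k, (Phat k).PosDef)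
    (hPsymm : ∀ k, (P k).IsSymm) (hPhatsymm : ∀ k, (Phat k).IsSymm)
    (W A C : Matrix (Fin (n * m)) (Fin (n * m)) ℝ)
    (hWsymm : W.IsSymm) (hWnn : ∀ i j, 0 ≤ W i j)
    (hWrow : ∀ i, ∑ j, W i j = 1) (hWcol : ∀ j, ∑ i, W i j = 1)
    (hA : A * Aᵀ = 1)
    (hCsymm : C.IsSymm) (hCpsd : C.PosSemidef)
    (hrecHat : ∀ k, Phat (k + 1) = W * (A * Phat k * Aᵀ + C) * Wᵀ)
    (hrec : ∀ k, P (k + 1) = A * P k * Aᵀ + C)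
    (h0 : (Phat 0).trace ≤ (P 0).trace) :
    ∀ k, (Phat k).trace ≤ (P k).trace := by
  have hAtA : Aᵀ * A = 1 := mul_eq_one_comm.mp hA
  have htrA : ∀ X : Matrix (Fin (n * m)) (Fin (n * m)) ℝ,
      (A * X * Aᵀ).trace = X.trace := fun X => by
    rw [Matrix.trace_mul_cycle, hAtA, Matrix.one_mul]
  intro k
  induction k with
  | zero => exact h0
  | succ k ih =>
    have hpsd : (A * Phat k * Aᵀ + C).PosSemidef := by
      have h1 : (A * Phat k * Aᵀ).PosSemidef := by
        have := (hPhat k).posSemidef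
        simpa [Matrix.conjTranspose_eq_transpose_of_trivial, Matrix.star_eq_conjTranspose] using
          this.mul_mul_conjTranspose_same A
      exact h1.add hCpsd
    calc (Phat (k+1)).trace = (W * (A * Phat k * Aᵀ + C) * Wᵀ).trace := by
          rw [hrecHat k]
      _ ≤ (A * Phat k * Aᵀ + C).trace := trace_conj_le hpsd hWnn hWrow hWcol
      _ = (Phat k).trace + C.trace := by rw [Matrix.trace_add, htrA]
      _ ≤ (P k).trace + C.trace := by linarith
      _ = (P (k+1)).trace := by rw [hrec k, Matrix.trace_add, htrA]
end
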